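/- In the setting of the multi-dimensional martingale lemma with D = 1, δ = 0: suppose additionally q ∈ (0,1), min_s 1/(6κτ_{s-1}) ≥ 4 ln(4t/q), and ∑_{s=0}^{t-1} τ_s² ≤ (1/100)·(ln(4t/q))^{-1}, and β_s ≥ 0. Then Pr[ z_t ≥ 2·max{1, z₀} ] ≤ q. -/

import Mathlib

open MeasureTheory

private lemma aux_int_bdd {Ω : Type*} {m0 : MeasurableSpace Ω} {μ : Measure Ω} [IsFiniteMeasure μ]
    {f : Ω → ℝ} (hf : AEStronglyMeasurable f μ) (C : ℝ) (h : ∀ ω, |f ω| ≤ C) :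
    Integrable f μ :=
  (integrable_const C).mono' hf
    (Filter.Eventually.of_forall fun ω => by simpa [Real.norm_eq_abs] using h ω)

private lemma aux_geom (m : ℕ) (r : ℝ) (hr0 : 0 ≤ r) (hr : r ≤ 1 / 4) :
    ∑ i ∈ Finset.range (m + 1), r ^ i ≤ 4 / 3 := by
  have h1 : ∑ i ∈ Finset.range (m + 1), r ^ i ≤ ∑ i ∈ Finset.range (m + 1), (1 / 4 : ℝ) ^ i :=
    Finset.sum_le_sum fun i _ => pow_le_pow_left₀ hr0 hr i
  have h2 : ∑ i ∈ Finset.range (m + 1), (1 / 4 : ℝ) ^ i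
      = ((1 / 4 : ℝ) ^ (m + 1) - 1) / (1 / 4 - 1) := geom_sum_eq (by norm_num) _
  have h3 : (0 : ℝ) ≤ (1 / 4 : ℝ) ^ (m + 1) := by positivity
  rw [h2] at h1
  refine h1.trans ?_
  rw [div_le_iff_of_neg (by norm_num : (1 / 4 : ℝ) - 1 < 0)]
  linarith

private lemma aux_binom (m : ℕ) (w d c : ℝ) (hw : 1 ≤ w) (hc : 0 ≤ c)
    (hd : |d| ≤ c * w) (hcm : ((m : ℝ) + 2) * c ≤ 1 / 4) :
    (w + d) ^ (m + 2) ≤ w ^ (m + 2) + ((m : ℝ) + 2) * w ^ (m + 1) * d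
      + 4 / 3 * ((m : ℝ) + 2) ^ 2 * (w ^ m * d ^ 2) := by
  have hw0 : (0 : ℝ) ≤ w := le_trans zero_le_one hw
  have hexp : (w + d) ^ (m + 2)
      = ∑ k ∈ Finset.range (m + 2 + 1), d ^ k * w ^ (m + 2 - k) * ((m + 2).choose k : ℝ) := by
    rw [add_comm w d]; exact add_pow d w (m + 2)
  rw [hexp, Finset.sum_range_succ', Finset.sum_range_succ']
  have key : ∀ i ∈ Finset.range (m + 1),
      d ^ (i + 1 + 1) * w ^ (m + 2 - (i + 1 + 1)) * ((m + 2).choose (i + 1 + 1) : ℝ)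
        ≤ (((m : ℝ) + 2) ^ 2 * ((((m : ℝ) + 2) * c) ^ i)) * (w ^ m * d ^ 2) := by
    intro i hi
    have him : i ≤ m := Nat.lt_succ_iff.mp (Finset.mem_range.mp hi)
    have hsub : m + 2 - (i + 1 + 1) = m - i := by omega
    have hdp : d ^ (i + 1 + 1) ≤ (c * w) ^ i * d ^ 2 := by
      have h1 : d ^ (i + 1 + 1) ≤ |d| ^ (i + 1 + 1) := by
        rw [← abs_pow]; exact le_abs_self _
      have h2 : |d| ^ (i + 1 + 1) = |d| ^ i * d ^ 2 := by
        rw [show i + 1 + 1 = i + 2 from rfl, pow_add, sq_abs]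
      have h3 : |d| ^ i ≤ (c * w) ^ i := pow_le_pow_left₀ (abs_nonneg d) hd i
      calc d ^ (i + 1 + 1) ≤ |d| ^ i * d ^ 2 := by rw [← h2]; exact h1
        _ ≤ (c * w) ^ i * d ^ 2 := by
            exact mul_le_mul_of_nonneg_right h3 (sq_nonneg d)
    have hchoose : ((m + 2).choose (i + 1 + 1) : ℝ) ≤ ((m : ℝ) + 2) ^ (i + 1 + 1) := by
      have := Nat.choose_le_pow (m + 2) (i + 1 + 1)
      calc ((m + 2).choose (i + 1 + 1) : ℝ) ≤ ((m + 2 : ℕ) : ℝ) ^ (i + 1 + 1) := by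
            exact_mod_cast this
        _ = ((m : ℝ) + 2) ^ (i + 1 + 1) := by push_cast; ring
    have hww : w ^ i * w ^ (m - i) = w ^ m := by
      rw [← pow_add]; congr 1; omega
    have hwsub : (0:ℝ) ≤ w ^ (m + 2 - (i + 1 + 1)) := by positivity
    have hch0 : (0:ℝ) ≤ ((m + 2).choose (i + 1 + 1) : ℝ) := by positivity
    calc d ^ (i + 1 + 1) * w ^ (m + 2 - (i + 1 + 1)) * ((m + 2).choose (i + 1 + 1) : ℝ)
        ≤ ((c * w) ^ i * d ^ 2) * w ^ (m + 2 - (i + 1 + 1)) * ((m + 2).choose (i + 1 + 1) : ℝ) := by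
          exact mul_le_mul_of_nonneg_right (mul_le_mul_of_nonneg_right hdp hwsub) hch0
      _ = (c ^ i * d ^ 2 * (w ^ i * w ^ (m - i))) * ((m + 2).choose (i + 1 + 1) : ℝ) := by
          rw [hsub, mul_pow]; ring
      _ = (c ^ i * d ^ 2 * w ^ m) * ((m + 2).choose (i + 1 + 1) : ℝ) := by rw [hww]
      _ ≤ (c ^ i * d ^ 2 * w ^ m) * (((m : ℝ) + 2) ^ (i + 1 + 1)) := by
          refine mul_le_mul_of_nonneg_left hchoose (by positivity)
      _ = (((m : ℝ) + 2) ^ 2 * ((((m : ℝ) + 2) * c) ^ i)) * (w ^ m * d ^ 2) := by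
          rw [show i + 1 + 1 = i + 2 from rfl, pow_add, mul_pow]; ring
  have hsum : ∑ i ∈ Finset.range (m + 1),
      d ^ (i + 1 + 1) * w ^ (m + 2 - (i + 1 + 1)) * ((m + 2).choose (i + 1 + 1) : ℝ)
      ≤ 4 / 3 * ((m : ℝ) + 2) ^ 2 * (w ^ m * d ^ 2) := by
    calc ∑ i ∈ Finset.range (m + 1),
        d ^ (i + 1 + 1) * w ^ (m + 2 - (i + 1 + 1)) * ((m + 2).choose (i + 1 + 1) : ℝ)
        ≤ ∑ i ∈ Finset.range (m + 1),
            (((m : ℝ) + 2) ^ 2 * ((((m : ℝ) + 2) * c) ^ i)) * (w ^ m * d ^ 2) :=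
          Finset.sum_le_sum key
      _ = (((m : ℝ) + 2) ^ 2 * (w ^ m * d ^ 2)) * ∑ i ∈ Finset.range (m + 1),
            (((m : ℝ) + 2) * c) ^ i := by
          rw [Finset.mul_sum]; exact Finset.sum_congr rfl fun i _ => by ring
      _ ≤ (((m : ℝ) + 2) ^ 2 * (w ^ m * d ^ 2)) * (4 / 3) := by
          refine mul_le_mul_of_nonneg_left
            (aux_geom m _ (by positivity) hcm) (by positivity)
      _ = 4 / 3 * ((m : ℝ) + 2) ^ 2 * (w ^ m * d ^ 2) := by ring
  have h0 : d ^ 0 * w ^ (m + 2 - 0) * ((m + 2).choose 0 : ℝ) = w ^ (m + 2) := by simp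
  have h1 : d ^ (0 + 1) * w ^ (m + 2 - (0 + 1)) * ((m + 2).choose (0 + 1) : ℝ)
      = ((m : ℝ) + 2) * w ^ (m + 1) * d := by
    simp [Nat.choose_one_right]; push_cast; ring
  rw [h0, h1]
  linarith [hsum]

private lemma aux_pullout' {Ω : Type*} {m0 : MeasurableSpace Ω} {μ : Measure Ω}
    [IsProbabilityMeasure μ] {F : MeasurableSpace Ω} (hF : F ≤ m0)
    {f g b : Ω → ℝ} (hfm : StronglyMeasurable[F] f) (hf0 : ∀ ω, 0 ≤ f ω)
    (hfb : ∃ C, ∀ ω, ‖f ω‖ ≤ C)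
    (hg : Integrable g μ) (hb2 : Integrable (fun ω => f ω * b ω) μ)
    (hgb : ∀ᵐ ω ∂μ, (μ[g|F]) ω ≤ b ω) :
    ∫ ω, f ω * g ω ∂μ ≤ ∫ ω, f ω * b ω ∂μ := by
  haveI : SigmaFinite (μ.trim hF) := inferInstance
  have hfsm : AEStronglyMeasurable[m0] f μ := (hfm.mono hF).aestronglyMeasurable
  have hfg : Integrable (f * g) μ := hg.bdd_mul hfsm (Filter.Eventually.of_forall hfb.choose_spec)
  have heq : μ[f * g|F] =ᵐ[μ] f * μ[g|F] := condExp_mul_of_stronglyMeasurable_left hfm hfg hg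
  have h1 : ∫ ω, f ω * g ω ∂μ = ∫ ω, (μ[f * g|F]) ω ∂μ := (integral_condExp hF).symm
  have h2 : ∫ ω, (μ[f * g|F]) ω ∂μ = ∫ ω, f ω * (μ[g|F]) ω ∂μ := integral_congr_ae heq
  have hint1 : Integrable (fun ω => f ω * (μ[g|F]) ω) μ :=
    (integrable_condExp (f := g) (m := F)).bdd_mul hfsm (Filter.Eventually.of_forall hfb.choose_spec)
  have h3 : ∫ ω, f ω * (μ[g|F]) ω ∂μ ≤ ∫ ω, f ω * b ω ∂μ := by
    refine integral_mono_ae hint1 hb2 ?_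
    filter_upwards [hgb] with ω h using mul_le_mul_of_nonneg_left h (hf0 ω)
  rw [h1, h2]; exact h3

private lemma aux_step {Ω : Type*} {m0 : MeasurableSpace Ω} {μ : Measure Ω}
    [IsProbabilityMeasure μ] {F : MeasurableSpace Ω} (hF : F ≤ m0)
    {x y : Ω → ℝ} (hxm : StronglyMeasurable[F] x) (hym : AEStronglyMeasurable[m0] y μ)
    (hx0 : ∀ ω, 0 ≤ x ω) (hy0 : ∀ ω, 0 ≤ y ω)
    (Cb : ℝ) (hCb : 0 ≤ Cb) (hCx : ∀ ω, x ω ≤ Cb) (hCy : ∀ ω, y ω ≤ Cb)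
    (τ c : ℝ) (hτ : 0 ≤ τ) (hc : 0 ≤ c) (m : ℕ) (hmc : ((m : ℝ) + 2) * c ≤ 1 / 4)
    (h1 : ∀ᵐ ω ∂μ, (μ[y|F]) ω ≤ x ω + τ ^ 2 * (x ω + 1))
    (h2 : ∀ᵐ ω ∂μ, (μ[fun ω' => (y ω' - x ω') ^ 2|F]) ω ≤ τ ^ 2 * (x ω + 1) ^ 2)
    (h3 : ∀ ω, |y ω - x ω| ≤ c * (x ω + 1)) :
    ∫ ω, (y ω + 1) ^ (m + 2) ∂μ
      ≤ (1 + 7 / 3 * ((m : ℝ) + 2) ^ 2 * τ ^ 2) * ∫ ω, (x ω + 1) ^ (m + 2) ∂μ := by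
  have hK1 : (1 : ℝ) ≤ Cb + 1 := by linarith
  have hK0 : (0 : ℝ) ≤ Cb + 1 := by linarith
  have hw0 : ∀ ω, (0:ℝ) ≤ x ω + 1 := fun ω => by linarith [hx0 ω]
  have hwK : ∀ ω, x ω + 1 ≤ Cb + 1 := fun ω => by linarith [hCx ω]
  have swnF : ∀ n : ℕ, StronglyMeasurable[F] (fun ω => (x ω + 1) ^ n) :=
    fun n => (hxm.add stronglyMeasurable_const).pow n
  have sx : StronglyMeasurable[m0] x := hxm.mono hF
  have swn : ∀ n : ℕ, StronglyMeasurable[m0] (fun ω => (x ω + 1) ^ n) :=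
    fun n => (swnF n).mono hF
  have hbwn : ∀ (n : ℕ) (ω : Ω), |(x ω + 1) ^ n| ≤ (Cb + 1) ^ n := fun n ω => by
    rw [abs_of_nonneg (pow_nonneg (hw0 ω) n)]
    exact pow_le_pow_left₀ (hw0 ω) (hwK ω) n
  have hInt : ∀ (g : Ω → ℝ), AEStronglyMeasurable[m0] g μ → ∀ Cg : ℝ, (∀ ω, |g ω| ≤ Cg) →
      ∀ n : ℕ, Integrable (fun ω => (x ω + 1) ^ n * g ω) μ := by
    intro g hgm Cg hCg n
    exact (aux_int_bdd hgm Cg hCg).bdd_mul (swn n).aestronglyMeasurable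
      (c := (Cb + 1) ^ n) (Filter.Eventually.of_forall fun ω => by rw [Real.norm_eq_abs]; exact hbwn n ω)
  have hd_bd : ∀ ω, |y ω - x ω| ≤ c * (Cb + 1) := fun ω =>
    (h3 ω).trans (mul_le_mul_of_nonneg_left (hwK ω) hc)
  have hd2_bd : ∀ ω, |(y ω - x ω) ^ 2| ≤ (c * (Cb + 1)) ^ 2 := fun ω => by
    rw [abs_pow]
    exact pow_le_pow_left₀ (abs_nonneg _) (hd_bd ω) 2
  have sdm : AEStronglyMeasurable[m0] (fun ω => y ω - x ω) μ := hym.sub sx.aestronglyMeasurable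
  have sd2m : AEStronglyMeasurable[m0] (fun ω => (y ω - x ω) ^ 2) μ := sdm.pow 2
  have sbm : AEStronglyMeasurable[m0] (fun ω => x ω + τ ^ 2 * (x ω + 1)) μ := by
    exact sx.aestronglyMeasurable.add
      ((sx.aestronglyMeasurable.add aestronglyMeasurable_const).const_mul (τ ^ 2))
  have sqm : AEStronglyMeasurable[m0] (fun ω => τ ^ 2 * (x ω + 1) ^ 2) μ := by
    exact (swn 2).aestronglyMeasurable.const_mul (τ ^ 2)
  -- integrable functions
  have I_w : ∀ n : ℕ, Integrable (fun ω => (x ω + 1) ^ n) μ := fun n =>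
    aux_int_bdd (swn n).aestronglyMeasurable ((Cb + 1) ^ n) (hbwn n)
  have I_w1 : Integrable (fun ω => (y ω + 1) ^ (m + 2)) μ := by
    refine aux_int_bdd ((hym.add aestronglyMeasurable_const).pow (m+2)) ((Cb + 1) ^ (m+2))
      fun ω => ?_
    rw [abs_of_nonneg (pow_nonneg (by linarith [hy0 ω]) _)]
    exact pow_le_pow_left₀ (by linarith [hy0 ω]) (by linarith [hCy ω]) _
  have I_mid : Integrable (fun ω => (x ω + 1) ^ (m + 1) * (y ω - x ω)) μ :=
    hInt _ sdm (c * (Cb + 1)) hd_bd (m + 1)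
  have I_quad : Integrable (fun ω => (x ω + 1) ^ m * (y ω - x ω) ^ 2) μ :=
    hInt _ sd2m ((c * (Cb + 1)) ^ 2) hd2_bd m
  have I_y : Integrable y μ :=
    aux_int_bdd hym (Cb + 1) (fun ω => by rw [abs_of_nonneg (hy0 ω)]; linarith [hCy ω])
  have I_fy : Integrable (fun ω => (x ω + 1) ^ (m + 1) * y ω) μ :=
    hInt _ hym (Cb + 1) (fun ω => by rw [abs_of_nonneg (hy0 ω)]; linarith [hCy ω]) (m+1)
  have I_fx : Integrable (fun ω => (x ω + 1) ^ (m + 1) * x ω) μ :=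
    hInt _ sx.aestronglyMeasurable (Cb + 1)
      (fun ω => by rw [abs_of_nonneg (hx0 ω)]; linarith [hCx ω]) (m+1)
  have I_fb : Integrable (fun ω => (x ω + 1) ^ (m + 1) * (x ω + τ ^ 2 * (x ω + 1))) μ := by
    refine hInt _ sbm ((Cb + 1) + τ ^ 2 * (Cb + 1)) (fun ω => ?_) (m+1)
    have hb0 : 0 ≤ x ω + τ ^ 2 * (x ω + 1) := by nlinarith [hx0 ω, hw0 ω, sq_nonneg τ]
    rw [abs_of_nonneg hb0]
    have h1 : τ ^ 2 * (x ω + 1) ≤ τ ^ 2 * (Cb + 1) :=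
      mul_le_mul_of_nonneg_left (hwK ω) (sq_nonneg τ)
    have := hCx ω
    linarith
  have I_qb : Integrable (fun ω => (x ω + 1) ^ m * (τ ^ 2 * (x ω + 1) ^ 2)) μ := by
    refine hInt _ sqm (τ ^ 2 * (Cb + 1) ^ 2) (fun ω => ?_) m
    rw [abs_of_nonneg (by positivity)]
    refine mul_le_mul_of_nonneg_left ?_ (sq_nonneg τ)
    exact pow_le_pow_left₀ (hw0 ω) (hwK ω) 2
  -- pointwise bound
  have key1 : ∀ ω, (y ω + 1) ^ (m + 2)
      ≤ (x ω + 1) ^ (m + 2) + ((m : ℝ) + 2) * ((x ω + 1) ^ (m + 1) * (y ω - x ω))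
        + (4 / 3 * ((m : ℝ) + 2) ^ 2) * ((x ω + 1) ^ m * (y ω - x ω) ^ 2) := by
    intro ω
    have hb := aux_binom m (x ω + 1) (y ω - x ω) c (by linarith [hx0 ω]) hc (h3 ω) hmc
    have hwd : x ω + 1 + (y ω - x ω) = y ω + 1 := by ring
    rw [hwd] at hb
    calc (y ω + 1) ^ (m + 2)
        ≤ (x ω + 1) ^ (m + 2) + ((m : ℝ) + 2) * (x ω + 1) ^ (m + 1) * (y ω - x ω)
          + 4 / 3 * ((m : ℝ) + 2) ^ 2 * ((x ω + 1) ^ m * (y ω - x ω) ^ 2) := hb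
      _ = _ := by ring
  have I_B : Integrable (fun ω => ((m : ℝ) + 2) * ((x ω + 1) ^ (m + 1) * (y ω - x ω))) μ :=
    I_mid.const_mul _
  have I_C : Integrable
      (fun ω => (4 / 3 * ((m : ℝ) + 2) ^ 2) * ((x ω + 1) ^ m * (y ω - x ω) ^ 2)) μ :=
    I_quad.const_mul _
  have I_AB : Integrable (fun ω => (x ω + 1) ^ (m + 2)
      + ((m : ℝ) + 2) * ((x ω + 1) ^ (m + 1) * (y ω - x ω))) μ := by
    exact (I_w (m+2)).add I_B
  have I_rhs : Integrable (fun ω => (x ω + 1) ^ (m + 2)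
      + ((m : ℝ) + 2) * ((x ω + 1) ^ (m + 1) * (y ω - x ω))
      + (4 / 3 * ((m : ℝ) + 2) ^ 2) * ((x ω + 1) ^ m * (y ω - x ω) ^ 2)) μ := by
    exact I_AB.add I_C
  have step1 : ∫ ω, (y ω + 1) ^ (m + 2) ∂μ
      ≤ ∫ ω, ((x ω + 1) ^ (m + 2)
          + ((m : ℝ) + 2) * ((x ω + 1) ^ (m + 1) * (y ω - x ω))
          + (4 / 3 * ((m : ℝ) + 2) ^ 2) * ((x ω + 1) ^ m * (y ω - x ω) ^ 2)) ∂μ :=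
    integral_mono I_w1 I_rhs key1
  have split : ∫ ω, ((x ω + 1) ^ (m + 2)
          + ((m : ℝ) + 2) * ((x ω + 1) ^ (m + 1) * (y ω - x ω))
          + (4 / 3 * ((m : ℝ) + 2) ^ 2) * ((x ω + 1) ^ m * (y ω - x ω) ^ 2)) ∂μ
      = (∫ ω, (x ω + 1) ^ (m + 2) ∂μ)
        + ((m : ℝ) + 2) * (∫ ω, (x ω + 1) ^ (m + 1) * (y ω - x ω) ∂μ)
        + (4 / 3 * ((m : ℝ) + 2) ^ 2) * (∫ ω, (x ω + 1) ^ m * (y ω - x ω) ^ 2 ∂μ) := by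
    rw [integral_add I_AB I_C, integral_add (I_w (m+2)) I_B,
      integral_const_mul, integral_const_mul]
  -- bound on mid term
  have hmid : ∫ ω, (x ω + 1) ^ (m + 1) * (y ω - x ω) ∂μ
      ≤ τ ^ 2 * ∫ ω, (x ω + 1) ^ (m + 2) ∂μ := by
    have e1 : ∫ ω, (x ω + 1) ^ (m + 1) * (y ω - x ω) ∂μ
        = (∫ ω, (x ω + 1) ^ (m + 1) * y ω ∂μ) - ∫ ω, (x ω + 1) ^ (m + 1) * x ω ∂μ := by
      rw [← integral_sub I_fy I_fx]
      exact integral_congr_ae (Filter.Eventually.of_forall fun ω => by ring)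
    have e2 : ∫ ω, (x ω + 1) ^ (m + 1) * y ω ∂μ
        ≤ ∫ ω, (x ω + 1) ^ (m + 1) * (x ω + τ ^ 2 * (x ω + 1)) ∂μ := by
      refine aux_pullout' hF (swnF (m+1)) (fun ω => pow_nonneg (hw0 ω) _)
        ⟨(Cb + 1) ^ (m+1), fun ω => by rw [Real.norm_eq_abs]; exact hbwn _ ω⟩
        I_y I_fb h1
    have e3 : ∫ ω, ((x ω + 1) ^ (m + 1) * (x ω + τ ^ 2 * (x ω + 1))
          - (x ω + 1) ^ (m + 1) * x ω) ∂μ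
        = τ ^ 2 * ∫ ω, (x ω + 1) ^ (m + 2) ∂μ := by
      rw [← integral_const_mul]
      exact integral_congr_ae (Filter.Eventually.of_forall fun ω => by ring)
    have e4 : ∫ ω, ((x ω + 1) ^ (m + 1) * (x ω + τ ^ 2 * (x ω + 1))
          - (x ω + 1) ^ (m + 1) * x ω) ∂μ
        = (∫ ω, (x ω + 1) ^ (m + 1) * (x ω + τ ^ 2 * (x ω + 1)) ∂μ)
          - ∫ ω, (x ω + 1) ^ (m + 1) * x ω ∂μ := integral_sub I_fb I_fx
    linarith
  -- bound on quad term
  have hquad : ∫ ω, (x ω + 1) ^ m * (y ω - x ω) ^ 2 ∂μ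
      ≤ τ ^ 2 * ∫ ω, (x ω + 1) ^ (m + 2) ∂μ := by
    have e2 : ∫ ω, (x ω + 1) ^ m * (y ω - x ω) ^ 2 ∂μ
        ≤ ∫ ω, (x ω + 1) ^ m * (τ ^ 2 * (x ω + 1) ^ 2) ∂μ := by
      refine aux_pullout' hF (swnF m) (fun ω => pow_nonneg (hw0 ω) _)
        ⟨(Cb + 1) ^ m, fun ω => by rw [Real.norm_eq_abs]; exact hbwn _ ω⟩
        (aux_int_bdd sd2m ((c * (Cb + 1)) ^ 2) hd2_bd)
        I_qb h2
    have e3 : ∫ ω, (x ω + 1) ^ m * (τ ^ 2 * (x ω + 1) ^ 2) ∂μ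
        = τ ^ 2 * ∫ ω, (x ω + 1) ^ (m + 2) ∂μ := by
      rw [← integral_const_mul]
      exact integral_congr_ae (Filter.Eventually.of_forall fun ω => by ring)
    linarith
  -- combine
  have hI0 : 0 ≤ ∫ ω, (x ω + 1) ^ (m + 2) ∂μ :=
    integral_nonneg fun ω => pow_nonneg (hw0 ω) _
  have hm2 : ((m : ℝ) + 2) ≤ ((m : ℝ) + 2) ^ 2 := by nlinarith [Nat.cast_nonneg (α := ℝ) m]
  have hτI : 0 ≤ τ ^ 2 * ∫ ω, (x ω + 1) ^ (m + 2) ∂μ := mul_nonneg (sq_nonneg τ) hI0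
  rw [split] at step1
  have c1 : ((m : ℝ) + 2) * (∫ ω, (x ω + 1) ^ (m + 1) * (y ω - x ω) ∂μ)
      ≤ ((m : ℝ) + 2) ^ 2 * (τ ^ 2 * ∫ ω, (x ω + 1) ^ (m + 2) ∂μ) := by
    calc ((m : ℝ) + 2) * (∫ ω, (x ω + 1) ^ (m + 1) * (y ω - x ω) ∂μ)
        ≤ ((m : ℝ) + 2) * (τ ^ 2 * ∫ ω, (x ω + 1) ^ (m + 2) ∂μ) :=
          mul_le_mul_of_nonneg_left hmid (by positivity)
      _ ≤ ((m : ℝ) + 2) ^ 2 * (τ ^ 2 * ∫ ω, (x ω + 1) ^ (m + 2) ∂μ) :=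
          mul_le_mul_of_nonneg_right hm2 hτI
  have c2 : (4 / 3 * ((m : ℝ) + 2) ^ 2) * (∫ ω, (x ω + 1) ^ m * (y ω - x ω) ^ 2 ∂μ)
      ≤ (4 / 3 * ((m : ℝ) + 2) ^ 2) * (τ ^ 2 * ∫ ω, (x ω + 1) ^ (m + 2) ∂μ) :=
    mul_le_mul_of_nonneg_left hquad (by positivity)
  nlinarith [step1, c1, c2]

set_option maxHeartbeats 1000000 in
/-- In the setting of the multi-dimensional martingale lemma with `D = 1`,
`δ = 0`: if moreover `q ∈ (0,1)`, `min_s 1/(6κτ_{s-1}) ≥ 4 ln(4t/q)`,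
`∑_{s<t} τ_s² ≤ (1/100)(ln(4t/q))⁻¹` and `β_s ≥ 0`, then
`Pr[z_t ≥ 2·max{1, z₀}] ≤ q`. -/
theorem martingale_concentration_doubling
    {Ω : Type*} {m0 : MeasurableSpace Ω} (μ : Measure Ω) [IsProbabilityMeasure μ]
    (ℱ : Filtration ℕ m0)
    (z : ℕ → Ω → ℝ) (β τ : ℕ → ℝ) (κ : ℝ) (t : ℕ)
    (hadapted : Adapted ℱ z)
    (hz_nonneg : ∀ s ω, 0 ≤ z s ω)
    (hβ : ∀ s, 0 ≤ β s) (hτ : ∀ s, 0 ≤ τ s) (hκ : 0 ≤ κ)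
    (hκτ : ∀ s, κ * τ s ≤ 1 / 6)
    (hint : ∀ s, Integrable (z s) μ)
    (hcond1 : ∀ s < t, ∀ᵐ ω ∂μ,
      (μ[z (s + 1)|ℱ s]) ω ≤ (1 - β s + (τ s) ^ 2) * z s ω + (τ s) ^ 2)
    (hcond2 : ∀ s < t, ∀ᵐ ω ∂μ,
      (μ[fun ω' => (z (s + 1) ω' - z s ω') ^ 2|ℱ s]) ω
        ≤ (τ s) ^ 2 * ((z s ω) ^ 2 + z s ω) + κ ^ 2 * (τ s) ^ 4)
    (hcond3 : ∀ s < t, ∀ ω, |z (s + 1) ω - z s ω|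
        ≤ κ * τ s * (z s ω + Real.sqrt (z s ω)) + κ ^ 2 * (τ s) ^ 2)
    (z0 : ℝ) (hz0 : ∀ ω, z 0 ω = z0)
    (q : ℝ) (hq0 : 0 < q) (hq1 : q < 1)
    (hp : ∀ s, 1 ≤ s → s ≤ t →
      6 * κ * τ (s - 1) * (4 * Real.log (4 * t / q)) ≤ 1)
    (hτsum : ∑ s ∈ Finset.range t, (τ s) ^ 2
        ≤ 1 / 100 * (Real.log (4 * t / q))⁻¹) :
    μ {ω | 2 * max 1 z0 ≤ z t ω} ≤ ENNReal.ofReal q := by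
  classical
  rcases Nat.eq_zero_or_pos t with ht0 | ht
  · subst ht0
    have hempty : {ω | 2 * max 1 z0 ≤ z 0 ω} = (∅ : Set Ω) := by
      ext ω
      simp only [Set.mem_setOf_eq, Set.mem_empty_iff_false, iff_false, not_le, hz0 ω]
      have h1 : (1:ℝ) ≤ max 1 z0 := le_max_left _ _
      have h2 : z0 ≤ max 1 z0 := le_max_right _ _
      linarith
    rw [hempty]
    simp
  obtain ⟨ω₀⟩ : Nonempty Ω := by
    by_contra h
    rw [not_nonempty_iff] at h
    have h1 : μ Set.univ = 1 := measure_univ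
    rw [Set.univ_eq_empty_iff.mpr h] at h1
    simp at h1
  have hz00 : 0 ≤ z0 := by rw [← hz0 ω₀]; exact hz_nonneg 0 ω₀
  set L : ℝ := Real.log (4 * t / q) with hLdef
  have ht1 : (1:ℝ) ≤ (t:ℝ) := by exact_mod_cast ht
  have hq1' : q ≤ 1 := le_of_lt hq1
  have h4t : (4:ℝ) ≤ 4 * t / q := by
    rw [le_div_iff₀ hq0]
    nlinarith
  have hlog4 : (1.38:ℝ) ≤ Real.log 4 := by
    have h4 : Real.log 4 = 2 * Real.log 2 := by
      rw [show (4:ℝ) = 2^2 by norm_num, Real.log_pow]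
      push_cast; ring
    nlinarith [Real.log_two_gt_d9]
  have hLlog4 : Real.log 4 ≤ L := by
    rw [hLdef]
    exact (Real.log_le_log_iff (by norm_num) (by linarith)).mpr h4t
  have hL0 : 0 < L := lt_of_lt_of_le (by linarith) hLlog4
  set p : ℕ := ⌊4 * L⌋₊ with hpdef
  have hp4L : (p:ℝ) ≤ 4 * L := Nat.floor_le (by positivity)
  have hpge : 4 * L - 1 ≤ (p:ℝ) := by
    have := Nat.lt_floor_add_one (4 * L)
    rw [hpdef]
    linarith
  have hp5 : 5 ≤ p := by
    rw [hpdef]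
    apply Nat.le_floor
    push_cast
    nlinarith
  obtain ⟨m, hm⟩ : ∃ m, p = m + 2 := ⟨p - 2, by omega⟩
  have hmcast : ((m:ℝ) + 2) = (p:ℝ) := by rw [hm]; push_cast; ring
  have hκτL : ∀ s, s < t → κ * τ s * (24 * L) ≤ 1 := by
    intro s hst
    have h := hp (s + 1) (by omega) (by omega)
    simp only [Nat.add_sub_cancel] at h
    calc κ * τ s * (24 * L) = 6 * κ * τ s * (4 * L) := by ring
      _ ≤ 1 := h
  have hmc : ∀ s, s < t → ((m:ℝ) + 2) * (3/2 * (κ * τ s)) ≤ 1/4 := by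
    intro s hst
    have h24 := hκτL s hst
    have hκτ0 : 0 ≤ κ * τ s := mul_nonneg hκ (hτ s)
    rw [hmcast]
    have h1 : (p:ℝ) * (κ * τ s) ≤ 4 * L * (κ * τ s) :=
      mul_le_mul_of_nonneg_right hp4L hκτ0
    nlinarith
  -- uniform bound on z
  have hB : ∀ s, s ≤ t → ∃ C, 0 ≤ C ∧ ∀ u, u ≤ s → ∀ ω, z u ω ≤ C := by
    intro s
    induction s with
    | zero =>
      intro _
      refine ⟨z0, hz00, fun u hu ω => ?_⟩
      have hu0 : u = 0 := Nat.le_zero.mp hu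
      subst hu0
      rw [hz0]
    | succ n ih =>
      intro hst
      obtain ⟨C, hC0, hC⟩ := ih (by omega)
      refine ⟨C + (κ * τ n * (C + Real.sqrt C) + κ^2 * (τ n)^2), ?_, ?_⟩
      · have := Real.sqrt_nonneg C
        have := mul_nonneg hκ (hτ n)
        positivity
      intro u hu ω
      by_cases hun : u ≤ n
      · have h1 := hC u hun ω
        have h2 : 0 ≤ κ * τ n * (C + Real.sqrt C) + κ^2 * (τ n)^2 := by
          have := Real.sqrt_nonneg C
          have := mul_nonneg hκ (hτ n)
          positivity
        linarith
      · have hue : u = n + 1 := by omega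
        subst hue
        have h3 := (abs_le.mp (hcond3 n (by omega) ω)).2
        have hsq : Real.sqrt (z n ω) ≤ Real.sqrt C := Real.sqrt_le_sqrt (hC n le_rfl ω)
        have hzn := hC n le_rfl ω
        have hmul : κ * τ n * (z n ω + Real.sqrt (z n ω)) ≤ κ * τ n * (C + Real.sqrt C) :=
          mul_le_mul_of_nonneg_left (by linarith) (mul_nonneg hκ (hτ n))
        linarith
  obtain ⟨C, hC0, hCz⟩ := hB t le_rfl
  -- moment induction
  have key : ∀ s, s ≤ t → ∫ ω, (z s ω + 1)^(m+2) ∂μ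
      ≤ (z0 + 1)^(m+2)
        * Real.exp (7/3 * ((m:ℝ)+2)^2 * ∑ u ∈ Finset.range s, (τ u)^2) := by
    intro s
    induction s with
    | zero =>
      intro _
      simp only [hz0]
      rw [integral_const]
      simp [Real.exp_zero]
    | succ n ih =>
      intro hst
      have hnt : n < t := by omega
      have ihb := ih (by omega)
      have h1' : ∀ᵐ ω ∂μ, (μ[z (n+1)|ℱ n]) ω ≤ z n ω + (τ n)^2 * (z n ω + 1) := by
        filter_upwards [hcond1 n hnt] with ω h
        nlinarith [mul_nonneg (hβ n) (hz_nonneg n ω)]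
      have ha2 : (κ * τ n)^2 ≤ 1 := by
        nlinarith [hκτ n, mul_nonneg hκ (hτ n)]
      have h2' : ∀ᵐ ω ∂μ, (μ[fun ω' => (z (n+1) ω' - z n ω')^2|ℱ n]) ω
          ≤ (τ n)^2 * (z n ω + 1)^2 := by
        have h4 : κ^2 * (τ n)^4 ≤ (τ n)^2 := by nlinarith [ha2, sq_nonneg (τ n)]
        filter_upwards [hcond2 n hnt] with ω h
        refine h.trans ?_
        nlinarith [mul_nonneg (sq_nonneg (τ n)) (hz_nonneg n ω)]
      have h3' : ∀ ω, |z (n+1) ω - z n ω| ≤ (3/2 * (κ * τ n)) * (z n ω + 1) := by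
        intro ω
        have h := hcond3 n hnt ω
        have hs := Real.sq_sqrt (hz_nonneg n ω)
        have hsn := Real.sqrt_nonneg (z n ω)
        have ha0 : 0 ≤ κ * τ n := mul_nonneg hκ (hτ n)
        have ha := hκτ n
        nlinarith [mul_nonneg ha0 (sq_nonneg (Real.sqrt (z n ω) - 1)),
          mul_nonneg ha0 (show (0:ℝ) ≤ 1 - κ * τ n by linarith)]
      have hstep := aux_step (ℱ.le n) (hadapted n).stronglyMeasurable
        ((hadapted (n+1)).stronglyMeasurable.mono (ℱ.le (n+1))).aestronglyMeasurable
        (hz_nonneg n) (hz_nonneg (n+1)) C hC0 (hCz n (by omega)) (hCz (n+1) (by omega))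
        (τ n) (3/2 * (κ * τ n)) (hτ n)
        (mul_nonneg (by norm_num) (mul_nonneg hκ (hτ n)))
        m (hmc n hnt) h1' h2' h3'
      have hfac : (0:ℝ) ≤ 1 + 7/3 * ((m:ℝ)+2)^2 * (τ n)^2 := by positivity
      have hint0 : 0 ≤ (z0 + 1)^(m+2)
          * Real.exp (7/3 * ((m:ℝ)+2)^2 * ∑ u ∈ Finset.range n, (τ u)^2) := by positivity
      calc ∫ ω, (z (n+1) ω + 1)^(m+2) ∂μ
          ≤ (1 + 7/3 * ((m:ℝ)+2)^2 * (τ n)^2) * ∫ ω, (z n ω + 1)^(m+2) ∂μ := hstep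
        _ ≤ (1 + 7/3 * ((m:ℝ)+2)^2 * (τ n)^2)
            * ((z0 + 1)^(m+2)
              * Real.exp (7/3 * ((m:ℝ)+2)^2 * ∑ u ∈ Finset.range n, (τ u)^2)) :=
            mul_le_mul_of_nonneg_left ihb hfac
        _ ≤ Real.exp (7/3 * ((m:ℝ)+2)^2 * (τ n)^2)
            * ((z0 + 1)^(m+2)
              * Real.exp (7/3 * ((m:ℝ)+2)^2 * ∑ u ∈ Finset.range n, (τ u)^2)) := by
            refine mul_le_mul_of_nonneg_right ?_ hint0
            have := Real.add_one_le_exp (7/3 * ((m:ℝ)+2)^2 * (τ n)^2)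
            linarith
        _ = (z0 + 1)^(m+2)
            * Real.exp (7/3 * ((m:ℝ)+2)^2 * ∑ u ∈ Finset.range (n+1), (τ u)^2) := by
            rw [Finset.sum_range_succ, mul_add, Real.exp_add]
            ring
  -- Markov and numerics
  have hmax1 : (1:ℝ) ≤ max 1 z0 := le_max_left _ _
  have hmaxz : z0 ≤ max 1 z0 := le_max_right _ _
  have hεpos : (0:ℝ) < (2 * max 1 z0 + 1)^(m+2) := by positivity
  have hztm : AEStronglyMeasurable (fun ω => (z t ω + 1)^(m+2)) μ :=
    ((((hadapted t).stronglyMeasurable.mono (ℱ.le t)).add stronglyMeasurable_const).pow (m+2)).aestronglyMeasurable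
  have hf_int : Integrable (fun ω => (z t ω + 1)^(m+2)) μ := by
    refine aux_int_bdd hztm ((C+1)^(m+2)) fun ω => ?_
    rw [abs_of_nonneg (pow_nonneg (by linarith [hz_nonneg t ω]) _)]
    exact pow_le_pow_left₀ (by linarith [hz_nonneg t ω]) (by linarith [hCz t le_rfl ω]) _
  have hf_nonneg : 0 ≤ᵐ[μ] (fun ω => (z t ω + 1)^(m+2)) :=
    Filter.Eventually.of_forall fun ω => pow_nonneg (by linarith [hz_nonneg t ω]) _
  have markov := mul_meas_ge_le_integral_of_nonneg hf_nonneg hf_int ((2 * max 1 z0 + 1)^(m+2))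
  have hsub : {ω | 2 * max 1 z0 ≤ z t ω}
      ⊆ {ω | (2 * max 1 z0 + 1)^(m+2) ≤ (z t ω + 1)^(m+2)} := by
    intro ω h
    simp only [Set.mem_setOf_eq] at h ⊢
    exact pow_le_pow_left₀ (by linarith) (by linarith) _
  -- final numeric bound
  set S : ℝ := ∑ u ∈ Finset.range t, (τ u)^2 with hSdef
  have hS0 : 0 ≤ S := Finset.sum_nonneg fun u _ => sq_nonneg _
  have hS : S ≤ 1/100 * L⁻¹ := hτsum
  have hpS : (p:ℝ) * S ≤ 1/25 := by
    have h1 : (p:ℝ) * S ≤ 4 * L * S := mul_le_mul_of_nonneg_right hp4L hS0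
    have h2 : 4 * L * S ≤ 4 * L * (1/100 * L⁻¹) :=
      mul_le_mul_of_nonneg_left hS (by positivity)
    have h3 : 4 * L * (1/100 * L⁻¹) = 1/25 := by
      field_simp
      ring
    linarith
  have hexp_arg : 7/3 * ((m:ℝ)+2)^2 * S ≤ 1/10 * (p:ℝ) := by
    rw [hmcast]
    have h1 : (p:ℝ) * ((p:ℝ) * S) ≤ (p:ℝ) * (1/25) :=
      mul_le_mul_of_nonneg_left hpS (Nat.cast_nonneg p)
    nlinarith [Nat.cast_nonneg (α := ℝ) p]
  have hratio : z0 + 1 ≤ 2/3 * (2 * max 1 z0 + 1) := by linarith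
  have h25 : Real.exp (2/5) ≤ 3/2 := by
    by_contra hcon
    push_neg at hcon
    have h5 : Real.exp (2/5) ^ 5 = Real.exp 2 := by
      rw [← Real.exp_nat_mul]
      norm_num
    have hlt : ((3:ℝ)/2)^5 ≤ Real.exp (2/5) ^ 5 :=
      pow_le_pow_left₀ (by norm_num) (le_of_lt hcon) 5
    have he2 : Real.exp 2 = Real.exp 1 ^ 2 := by
      rw [← Real.exp_nat_mul]; norm_num
    nlinarith [Real.exp_one_lt_d9, Real.exp_pos 1]
  have h23 : (2/3 : ℝ) ≤ Real.exp (-(2/5)) := by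
    rw [Real.exp_neg, show (2/3:ℝ) = (3/2)⁻¹ by norm_num]
    exact inv_anti₀ (Real.exp_pos _) h25
  have h23p : (2/3 : ℝ)^(m+2) ≤ Real.exp (-(2/5) * (p:ℝ)) := by
    calc (2/3 : ℝ)^(m+2) ≤ (Real.exp (-(2/5)))^(m+2) :=
        pow_le_pow_left₀ (by norm_num) h23 _
      _ = Real.exp (-(2/5) * (p:ℝ)) := by
        rw [← Real.exp_nat_mul, hm]
        push_cast
        ring_nf
  have hqbound : Real.exp (-(3/10) * (p:ℝ)) ≤ q := by
    rw [← Real.exp_log hq0]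
    apply Real.exp_le_exp.mpr
    have hlogq : Real.log q = Real.log (4 * t) - L := by
      rw [hLdef, Real.log_div (by positivity) (ne_of_gt hq0)]
      ring
    have hlog4t : Real.log 4 ≤ Real.log (4 * t) :=
      (Real.log_le_log_iff (by norm_num) (by nlinarith)).mpr (by nlinarith)
    rw [hlogq]
    nlinarith
  have hfinal : ∫ ω, (z t ω + 1)^(m+2) ∂μ ≤ (2 * max 1 z0 + 1)^(m+2) * q := by
    have e1 := key t le_rfl
    have e2 : (z0 + 1)^(m+2) ≤ (2/3:ℝ)^(m+2) * (2 * max 1 z0 + 1)^(m+2) := by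
      rw [← mul_pow]
      exact pow_le_pow_left₀ (by linarith) hratio _
    have hexpS := Real.exp_le_exp.mpr hexp_arg
    have e3 : (z0 + 1)^(m+2) * Real.exp (7/3 * ((m:ℝ)+2)^2 * S)
        ≤ ((2/3:ℝ)^(m+2) * (2 * max 1 z0 + 1)^(m+2)) * Real.exp (1/10 * (p:ℝ)) := by
      have := mul_le_mul e2 hexpS (Real.exp_pos _).le (by positivity)
      linarith
    have e4 : ((2/3:ℝ)^(m+2) * (2 * max 1 z0 + 1)^(m+2)) * Real.exp (1/10 * (p:ℝ))
        ≤ (Real.exp (-(2/5) * (p:ℝ)) * (2 * max 1 z0 + 1)^(m+2))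
          * Real.exp (1/10 * (p:ℝ)) := by
      have h := mul_le_mul_of_nonneg_right
        (mul_le_mul_of_nonneg_right h23p (le_of_lt hεpos)) (Real.exp_pos (1/10 * (p:ℝ))).le
      linarith
    have e5 : (Real.exp (-(2/5) * (p:ℝ)) * (2 * max 1 z0 + 1)^(m+2))
          * Real.exp (1/10 * (p:ℝ))
        = (2 * max 1 z0 + 1)^(m+2) * Real.exp (-(3/10) * (p:ℝ)) := by
      rw [mul_comm (Real.exp (-(2/5) * (p:ℝ))) _, mul_assoc, ← Real.exp_add]
      ring_nf
    have e6 : (2 * max 1 z0 + 1)^(m+2) * Real.exp (-(3/10) * (p:ℝ))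
        ≤ (2 * max 1 z0 + 1)^(m+2) * q :=
      mul_le_mul_of_nonneg_left hqbound (le_of_lt hεpos)
    calc ∫ ω, (z t ω + 1)^(m+2) ∂μ
        ≤ (z0 + 1)^(m+2) * Real.exp (7/3 * ((m:ℝ)+2)^2 * S) := e1
      _ ≤ ((2/3:ℝ)^(m+2) * (2 * max 1 z0 + 1)^(m+2)) * Real.exp (1/10 * (p:ℝ)) := e3
      _ ≤ (Real.exp (-(2/5) * (p:ℝ)) * (2 * max 1 z0 + 1)^(m+2))
          * Real.exp (1/10 * (p:ℝ)) := e4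
      _ = (2 * max 1 z0 + 1)^(m+2) * Real.exp (-(3/10) * (p:ℝ)) := e5
      _ ≤ (2 * max 1 z0 + 1)^(m+2) * q := e6
  -- conclude
  rw [ENNReal.le_ofReal_iff_toReal_le (measure_ne_top μ _) (le_of_lt hq0)]
  have hmono : (μ {ω | 2 * max 1 z0 ≤ z t ω}).toReal
      ≤ (μ {ω | (2 * max 1 z0 + 1)^(m+2) ≤ (z t ω + 1)^(m+2)}).toReal :=
    ENNReal.toReal_mono (measure_ne_top μ _) (measure_mono hsub)
  have hmarkov2 : (μ {ω | (2 * max 1 z0 + 1)^(m+2) ≤ (z t ω + 1)^(m+2)}).toReal ≤ q := by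
    calc (μ {ω | (2 * max 1 z0 + 1)^(m+2) ≤ (z t ω + 1)^(m+2)}).toReal
        ≤ (∫ ω, (z t ω + 1)^(m+2) ∂μ) / (2 * max 1 z0 + 1)^(m+2) := by
          rw [le_div_iff₀ hεpos]
          rw [measureReal_def] at markov
          linarith [markov]
      _ ≤ q := by
          rw [div_le_iff₀ hεpos]
          linarith [hfinal]
  linarith
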